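/- For all nonnegative integers n, m, r and every real (or polynomial variable) y, C(m+r,m)·w̃_{n,m+r}(y) = y^r · ∑_{k=0}^{n} C(n,k)·{n−k brace r}·w̃_{k,m}(y). -/

import Mathlib

/-- Stirling numbers of the second kind. -/
def stirling2 : ℕ → ℕ → ℕ
  | 0, 0 => 1
  | 0, _ + 1 => 0
  | _ + 1, 0 => 0
  | n + 1, k + 1 => (k + 1) * stirling2 n (k + 1) + stirling2 n k

/-- Derangement numbers `d_n = n! ∑_{i=0}^n (-1)^i / i!`. -/
noncomputable def derang (n : ℕ) : ℝ :=
  (n.factorial : ℝ) * ∑ i ∈ Finset.range (n + 1), (-1 : ℝ) ^ i / (i.factorial : ℝ)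

/-- Partial derangement numbers `d_{n,r}`. -/
noncomputable def pderang (n r : ℕ) : ℝ :=
  if r ≤ n then (n.choose r : ℝ) * derang (n - r) else 0

/-- Partial deranged Bell polynomials `w̃_{n,r}(y)`. -/
noncomputable def pdbPoly (n r : ℕ) (y : ℝ) : ℝ :=
  ∑ k ∈ Finset.range (n + 1), (stirling2 n k : ℝ) * pderang k r * y ^ k

lemma stirling2_zero_zero : stirling2 0 0 = 1 := rfl
lemma stirling2_zero_succ (k : ℕ) : stirling2 0 (k+1) = 0 := rfl
lemma stirling2_succ_zero (n : ℕ) : stirling2 (n+1) 0 = 0 := rfl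
lemma stirling2_succ_succ (n k : ℕ) :
    stirling2 (n+1) (k+1) = (k + 1) * stirling2 n (k + 1) + stirling2 n k := rfl

lemma stirling2_eq_zero_of_lt : ∀ n k, n < k → stirling2 n k = 0 := by
  intro n
  induction n with
  | zero =>
    intro k hk
    cases k with
    | zero => omega
    | succ k => rfl
  | succ n ih =>
    intro k hk
    cases k with
    | zero => omega
    | succ k =>
      rw [stirling2_succ_succ, ih (k+1) (by omega), ih k (by omega)]
      simp

lemma conv_right_zero (n i : ℕ) :
    ∑ j ∈ Finset.range (n+1), n.choose j * stirling2 j i * stirling2 (n-j) 0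
      = stirling2 n i := by
  rw [Finset.sum_range_succ]
  have h : ∀ j ∈ Finset.range n, n.choose j * stirling2 j i * stirling2 (n-j) 0 = 0 := by
    intro j hj
    simp only [Finset.mem_range] at hj
    obtain ⟨t, ht⟩ : ∃ t, n - j = t + 1 := ⟨n - j - 1, by omega⟩
    rw [ht, stirling2_succ_zero, mul_zero]
  rw [Finset.sum_eq_zero h]
  simp [stirling2_zero_zero]

lemma conv_left_zero (n r : ℕ) :
    ∑ j ∈ Finset.range (n+1), n.choose j * stirling2 j 0 * stirling2 (n-j) r
      = stirling2 n r := by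
  rw [Finset.sum_range_succ']
  have h : ∀ j ∈ Finset.range n,
      n.choose (j+1) * stirling2 (j+1) 0 * stirling2 (n-(j+1)) r = 0 := by
    intro j hj; rw [stirling2_succ_zero]; ring
  rw [Finset.sum_eq_zero h]
  simp [stirling2_zero_zero]

/-- The Stirling convolution identity
`C(i+r,r) {n, i+r} = ∑_j C(n,j) {j,i} {n-j,r}`. -/
lemma stirling2_conv : ∀ n i r : ℕ, (i+r).choose r * stirling2 n (i+r)
    = ∑ j ∈ Finset.range (n+1), n.choose j * stirling2 j i * stirling2 (n-j) r := by
  intro n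
  induction n with
  | zero =>
    intro i r
    cases i with
    | zero => simpa using (conv_left_zero 0 r).symm
    | succ i =>
      cases r with
      | zero => simpa using (conv_right_zero 0 (i+1)).symm
      | succ r =>
        simp [show i+1+(r+1) = (i+r+1)+1 by ring, stirling2_zero_succ]
  | succ n ih =>
    intro i r
    cases i with
    | zero => simpa using (conv_left_zero (n+1) r).symm
    | succ i =>
      cases r with
      | zero => simpa using (conv_right_zero (n+1) (i+1)).symm
      | succ r =>
        have hsplit : ∑ j ∈ Finset.range (n+2),
            (n+1).choose j * stirling2 j (i+1) * stirling2 (n+1-j) (r+1)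
            = (∑ j ∈ Finset.range (n+1),
                n.choose j * stirling2 (j+1) (i+1) * stirling2 (n-j) (r+1))
              + ∑ j ∈ Finset.range (n+1),
                n.choose j * stirling2 j (i+1) * stirling2 ((n-j)+1) (r+1) := by
          rw [Finset.sum_range_succ']
          have e1 : ∀ j ∈ Finset.range (n+1),
              (n+1).choose (j+1) * stirling2 (j+1) (i+1) * stirling2 (n+1-(j+1)) (r+1)
              = n.choose j * stirling2 (j+1) (i+1) * stirling2 (n-j) (r+1)
                + n.choose (j+1) * stirling2 (j+1) (i+1) * stirling2 (n-j) (r+1) := by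
            intro j hj
            rw [Nat.choose_succ_succ]
            have h : n+1-(j+1) = n-j := by omega
            rw [h]; ring
          rw [Finset.sum_congr rfl e1, Finset.sum_add_distrib]
          have e2 : (∑ j ∈ Finset.range (n+1),
              n.choose (j+1) * stirling2 (j+1) (i+1) * stirling2 (n-j) (r+1))
              + (n+1).choose 0 * stirling2 0 (i+1) * stirling2 (n+1-0) (r+1)
              = ∑ j ∈ Finset.range (n+1),
                n.choose j * stirling2 j (i+1) * stirling2 ((n-j)+1) (r+1) := by
            have h : ∀ j ∈ Finset.range (n+1),
                n.choose (j+1) * stirling2 (j+1) (i+1) * stirling2 (n-j) (r+1)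
                = n.choose (j+1) * stirling2 (j+1) (i+1) * stirling2 (n-(j+1)+1) (r+1) := by
              intro j hj
              simp only [Finset.mem_range] at hj
              by_cases hjn : j < n
              · congr 2
                omega
              · have hj' : j = n := by omega
                subst hj'
                rw [Nat.choose_succ_self]; ring
            have hterm : (n+1).choose 0 * stirling2 0 (i+1) * stirling2 (n+1-0) (r+1)
                = n.choose 0 * stirling2 0 (i+1) * stirling2 (n-0+1) (r+1) := by
              norm_num
            rw [Finset.sum_congr rfl h, hterm,
              ← Finset.sum_range_succ'
                (fun j => n.choose j * stirling2 j (i+1) * stirling2 (n-j+1) (r+1)) (n+1),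
              Finset.sum_range_succ]
            simp [Nat.choose_succ_self]
          rw [add_assoc, e2]
        rw [hsplit]
        have e3 : ∀ j ∈ Finset.range (n+1),
            n.choose j * stirling2 (j+1) (i+1) * stirling2 (n-j) (r+1)
            = (i+1) * (n.choose j * stirling2 j (i+1) * stirling2 (n-j) (r+1))
              + n.choose j * stirling2 j i * stirling2 (n-j) (r+1) := by
          intro j _; rw [stirling2_succ_succ]; ring
        have e4 : ∀ j ∈ Finset.range (n+1),
            n.choose j * stirling2 j (i+1) * stirling2 ((n-j)+1) (r+1)
            = (r+1) * (n.choose j * stirling2 j (i+1) * stirling2 (n-j) (r+1))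
              + n.choose j * stirling2 j (i+1) * stirling2 (n-j) r := by
          intro j _; rw [stirling2_succ_succ]; ring
        rw [Finset.sum_congr rfl e3, Finset.sum_congr rfl e4,
          Finset.sum_add_distrib, Finset.sum_add_distrib,
          ← Finset.mul_sum, ← Finset.mul_sum,
          ← ih (i+1) (r+1), ← ih i (r+1), ← ih (i+1) r]
        have h1 : i + (r+1) = i + r + 1 := by ring
        have h2 : (i+1) + r = i + r + 1 := by ring
        have h3 : (i+1)+(r+1) = (i+r+1)+1 := by ring
        rw [h1, h2, h3, stirling2_succ_succ]
        rw [Nat.choose_succ_succ']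
        ring

lemma pderang_key (m r k : ℕ) :
    ((m + r).choose m : ℝ) * pderang k (m + r) = (k.choose r : ℝ) * pderang (k - r) m := by
  unfold pderang
  by_cases h1 : m + r ≤ k
  · have hm : m ≤ k - r := by omega
    rw [if_pos h1, if_pos hm]
    have hnat : k.choose (m+r) * (m+r).choose m = k.choose r * (k-r).choose m := by
      have h := Nat.choose_mul (n := k) (show r ≤ m + r by omega)
      have hsym : (m+r).choose m = (m+r).choose r := by
        rw [← Nat.choose_symm (show r ≤ m+r by omega)]
        congr 1
        omega
      rw [hsym, h]
      congr 2
      omega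
    have hsub : k - (m+r) = k - r - m := by omega
    rw [hsub]
    have hR := congrArg (fun t : ℕ => (t : ℝ)) hnat
    push_cast at hR
    linear_combination derang (k - r - m) * hR
  · rw [if_neg h1]
    by_cases h2 : r ≤ k
    · rw [if_neg (show ¬ m ≤ k - r by omega)]
      ring
    · rw [Nat.choose_eq_zero_of_lt (show k < r by omega)]
      simp

/-- `C(m+r,m) w̃_{n,m+r}(y) = y^r ∑_{k=0}^n C(n,k) {n-k brace r} w̃_{k,m}(y)`. -/
theorem choose_mul_pdbPoly_add (n m r : ℕ) (y : ℝ) :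
    ((m + r).choose m : ℝ) * pdbPoly n (m + r) y =
      y ^ r * ∑ k ∈ Finset.range (n + 1),
        (n.choose k : ℝ) * (stirling2 (n - k) r : ℝ) * pdbPoly k m y := by
  -- Rewrite the RHS
  have hrhs : y ^ r * ∑ k ∈ Finset.range (n + 1),
      (n.choose k : ℝ) * (stirling2 (n - k) r : ℝ) * pdbPoly k m y
      = ∑ i ∈ Finset.range (n + 1),
        ((i+r).choose r : ℝ) * (stirling2 n (i+r) : ℝ) * pderang i m * y ^ (i+r) := by
    unfold pdbPoly
    have hinner : ∀ k ∈ Finset.range (n+1),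
        (n.choose k : ℝ) * (stirling2 (n - k) r : ℝ) *
          ∑ i ∈ Finset.range (k + 1), (stirling2 k i : ℝ) * pderang i m * y ^ i
        = ∑ i ∈ Finset.range (n + 1),
          (n.choose k : ℝ) * (stirling2 (n - k) r : ℝ) *
            ((stirling2 k i : ℝ) * pderang i m * y ^ i) := by
      intro k hk
      simp only [Finset.mem_range] at hk
      rw [Finset.mul_sum]
      apply Finset.sum_subset
      · intro x hx
        simp only [Finset.mem_range] at *
        omega
      · intro x hx hx'
        simp only [Finset.mem_range] at *
        rw [stirling2_eq_zero_of_lt k x (by omega)]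
        push_cast
        ring
    rw [Finset.sum_congr rfl hinner, Finset.sum_comm, Finset.mul_sum]
    apply Finset.sum_congr rfl
    intro i _
    have hkey := stirling2_conv n i r
    have hkeyR := congrArg (fun t : ℕ => (t : ℝ)) hkey
    push_cast at hkeyR
    calc y ^ r * ∑ k ∈ Finset.range (n + 1),
          (n.choose k : ℝ) * (stirling2 (n - k) r : ℝ) *
            ((stirling2 k i : ℝ) * pderang i m * y ^ i)
        = (∑ k ∈ Finset.range (n + 1),
            (n.choose k : ℝ) * (stirling2 k i : ℝ) * (stirling2 (n - k) r : ℝ))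
            * pderang i m * (y ^ r * y ^ i) := by
          rw [Finset.sum_mul, Finset.sum_mul, Finset.mul_sum]
          apply Finset.sum_congr rfl
          intro k _
          ring
      _ = ((i+r).choose r : ℝ) * (stirling2 n (i+r) : ℝ) * pderang i m * y ^ (i+r) := by
          rw [← hkeyR, pow_add]
          ring
  rw [hrhs]
  -- Rewrite the LHS
  unfold pdbPoly
  rw [Finset.mul_sum]
  have hlhs : ∀ k ∈ Finset.range (n+1),
      ((m + r).choose m : ℝ) * ((stirling2 n k : ℝ) * pderang k (m+r) * y ^ k)
      = (stirling2 n k : ℝ) * ((k.choose r : ℝ) * pderang (k-r) m) * y ^ k := by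
    intro k _
    rw [← pderang_key m r k]
    ring
  rw [Finset.sum_congr rfl hlhs]
  -- Now reindex: the remaining goal is
  -- ∑_{k<n+1} g k = ∑_{i<n+1} g (i+r)  where g k = S(n,k) C(k,r) pderang (k-r) m y^k
  set g : ℕ → ℝ := fun k => (stirling2 n k : ℝ) * ((k.choose r : ℝ) * pderang (k-r) m) * y ^ k
    with hg
  have hzero_big : ∀ k, n < k → g k = 0 := by
    intro k hk
    simp only [hg, stirling2_eq_zero_of_lt n k hk]
    push_cast
    ring
  have hzero_small : ∀ k, k < r → g k = 0 := by
    intro k hk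
    simp only [hg, Nat.choose_eq_zero_of_lt hk]
    push_cast
    ring
  have hext : ∑ k ∈ Finset.range (n+1), g k = ∑ k ∈ Finset.range (r + (n+1)), g k := by
    apply Finset.sum_subset
    · intro x hx
      simp only [Finset.mem_range] at *
      omega
    · intro x hx hx'
      simp only [Finset.mem_range] at *
      exact hzero_big x (by omega)
  rw [hext, ← Finset.sum_range_add_sum_Ico g (show r ≤ r + (n+1) by omega),
    Finset.sum_eq_zero (fun k hk => hzero_small k (Finset.mem_range.mp hk)), zero_add,
    Finset.sum_Ico_eq_sum_range]
  have hlen : r + (n+1) - r = n + 1 := by omega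
  rw [hlen]
  apply Finset.sum_congr rfl
  intro i _
  simp only [hg]
  have h1 : r + i = i + r := by ring
  have h2 : i + r - r = i := by omega
  rw [h1, h2]
  ring
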